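/- arXiv:0806.1327 — 2 statements merged into one kernel-verified Lean document; each statement's English description precedes it below -/
import Mathlib

section
/- The limit as N → ∞ of (1/N) ∑_{m=1}^{N} ∏_{p prime, p ∣ m} (1 + 1/p) equals ζ(2)/ζ(4) = 15/π². -/
open Filter Finset

noncomputable def sqfWeight (d : ℕ) : ℂ := if Squarefree d then 1 / (d : ℂ) else 0

noncomputable def sqfSq (d : ℕ) : ℂ := if Squarefree d then 1 / (d : ℂ) ^ 2 else 0

lemma sqfSq_eq (d : ℕ) : sqfSq d = sqfWeight d * (1 / (d : ℂ)) := by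
  unfold sqfSq sqfWeight
  split <;> simp [pow_two, div_mul_div_comm]


lemma prod_primeFactors_eq_sum_divisors {m : ℕ} (hm : m ≠ 0) :
    ∏ p ∈ m.primeFactors, (1 + 1 / (p : ℂ)) = ∑ d ∈ m.divisors, sqfWeight d := by
  unfold sqfWeight
  rw [← Finset.sum_filter, Nat.sum_divisors_filter_squarefree hm,
    Nat.factors_eq, List.toFinset_coe, Nat.toFinset_factors]
  simp_rw [add_comm (1 : ℂ)]
  rw [Finset.prod_add]
  refine Finset.sum_congr rfl fun t ht => ?_
  rw [Finset.prod_const_one, mul_one]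
  rw [show (t.val.prod : ℕ) = ∏ p ∈ t, p from (Finset.prod_eq_multiset_prod t id).symm ▸ by simp]
  push_cast
  simp [one_div, Finset.prod_inv_distrib]

lemma card_Icc_filter_dvd (d N : ℕ) :
    #({m ∈ Finset.Icc 1 N | d ∣ m}) = N / d := by
  rw [← Nat.card_multiples N d]
  apply Finset.card_nbij' (fun m => m - 1) (fun e => e + 1)
  · intro m hm
    simp only [mem_coe, mem_filter, mem_Icc, mem_range] at hm ⊢
    obtain ⟨⟨h1, h2⟩, hdvd⟩ := hm
    have : m - 1 + 1 = m := by omega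
    rw [this]
    exact ⟨by omega, hdvd⟩
  · intro e he
    simp only [mem_coe, mem_filter, mem_Icc, mem_range] at he ⊢
    exact ⟨⟨by omega, by omega⟩, he.2⟩
  · intro m hm
    simp only [mem_coe, mem_filter, mem_Icc] at hm
    dsimp only
    omega
  · intro e he; dsimp only; omega

lemma swap_sum (N : ℕ) :
    ∑ m ∈ Finset.Icc 1 N, ∑ d ∈ m.divisors, sqfWeight d
      = ∑ d ∈ Finset.Icc 1 N, ((N / d : ℕ) : ℂ) * sqfWeight d := by
  rw [Finset.sum_comm' (t' := Finset.Icc 1 N)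
    (s' := fun d => {m ∈ Finset.Icc 1 N | d ∣ m}) ?h]
  · refine Finset.sum_congr rfl fun d _ => ?_
    rw [Finset.sum_const, card_Icc_filter_dvd, nsmul_eq_mul]
  · intro m d
    simp only [mem_Icc, Nat.mem_divisors, mem_filter]
    constructor
    · rintro ⟨⟨h1, h2⟩, hdvd, hne⟩
      have hd0 : 0 < d := Nat.pos_of_ne_zero (by rintro rfl; omega)
      exact ⟨⟨⟨h1, h2⟩, hdvd⟩, hd0, le_trans (Nat.le_of_dvd (by omega) hdvd) h2⟩
    · rintro ⟨⟨⟨h1, h2⟩, hdvd⟩, _, _⟩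
      exact ⟨⟨h1, h2⟩, hdvd, by omega⟩

lemma tendsto_floor_ratio {d : ℕ} (hd : 0 < d) :
    Tendsto (fun N : ℕ => ((N / d : ℕ) : ℂ) / (N : ℂ)) atTop (nhds (1 / (d : ℂ))) := by
  rw [tendsto_iff_norm_sub_tendsto_zero]
  apply squeeze_zero' (g := fun N : ℕ => (d : ℝ) / N)
  · exact Eventually.of_forall fun N => norm_nonneg _
  · filter_upwards [eventually_ge_atTop 1] with N hN
    have hN0 : (N : ℂ) ≠ 0 := Nat.cast_ne_zero.mpr (by omega)
    have hd0 : (d : ℂ) ≠ 0 := Nat.cast_ne_zero.mpr hd.ne'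
    have h1 : d * (N / d) + N % d = N := Nat.div_add_mod N d
    have h2 : (d : ℂ) * ((N / d : ℕ) : ℂ) + ((N % d : ℕ) : ℂ) = (N : ℂ) := by
      exact_mod_cast congrArg (fun k : ℕ => (k : ℂ)) h1
    have key : ((N / d : ℕ) : ℂ) * d - N = -((N % d : ℕ) : ℂ) := by
      linear_combination h2
    have diff : ((N / d : ℕ) : ℂ) / N - 1 / d = -((N % d : ℕ) : ℂ) / (N * d) := by
      rw [div_sub_div _ _ hN0 hd0, mul_one, key]
    rw [diff, norm_div, norm_neg, Complex.norm_natCast, norm_mul,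
      Complex.norm_natCast, Complex.norm_natCast]
    apply div_le_div₀ (by positivity)
    · exact_mod_cast (Nat.mod_lt N hd).le
    · exact_mod_cast Nat.pos_of_ne_zero (by omega)
    · exact le_mul_of_one_le_right (by positivity) (by exact_mod_cast hd)
  · exact tendsto_const_div_atTop_nhds_zero_nat (d : ℝ)


lemma norm_sqfSq_le (d : ℕ) : ‖sqfSq d‖ ≤ 1 / (d : ℝ) ^ 2 := by
  unfold sqfSq
  split
  · rw [norm_div, norm_pow, norm_one, Complex.norm_natCast]
  · simp only [norm_zero]
    positivity

lemma summable_sqfSq_norm : Summable (fun d : ℕ => ‖sqfSq d‖) :=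
  (Real.summable_one_div_nat_pow.mpr one_lt_two).of_nonneg_of_le
    (fun _ => norm_nonneg _) norm_sqfSq_le

lemma sqfSq_mul {m n : ℕ} (h : m.Coprime n) : sqfSq (m * n) = sqfSq m * sqfSq n := by
  simp only [sqfSq, Nat.squarefree_mul h]
  by_cases hm : Squarefree m <;> by_cases hn : Squarefree n <;>
    simp [hm, hn, mul_pow, div_mul_div_comm, mul_comm]

lemma tsum_pow_sqfSq {p : ℕ} (hp : p.Prime) :
    ∑' e : ℕ, sqfSq (p ^ e) = 1 + 1 / (p : ℂ) ^ 2 := by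
  rw [tsum_eq_sum (s := {0, 1}) ?h]
  · rw [Finset.sum_insert (by norm_num), Finset.sum_singleton]
    unfold sqfSq
    rw [pow_zero, pow_one, if_pos squarefree_one, if_pos hp.squarefree]
    norm_num
  · intro e he
    simp only [Finset.mem_insert, Finset.mem_singleton] at he
    have h2 : 2 ≤ e := by omega
    unfold sqfSq
    rw [if_neg]
    intro hsq
    have : p * p ∣ p ^ e := by
      have : p ^ 2 ∣ p ^ e := pow_dvd_pow p h2
      rwa [pow_two] at this
    exact hp.one_lt.ne' (Nat.isUnit_iff.mp (hsq p this))

lemma tsum_sqfSq : ∑' d : ℕ, sqfSq d = riemannZeta 2 / riemannZeta 4 := by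
  have h0 : sqfSq 0 = 0 := by unfold sqfSq; simp [not_squarefree_zero]
  have h1 : sqfSq 1 = 1 := by unfold sqfSq; simp [squarefree_one]
  have hprod : HasProd (fun p : Nat.Primes => ∑' e : ℕ, sqfSq ((p : ℕ) ^ e))
      (∑' n : ℕ, sqfSq n) :=
    EulerProduct.eulerProduct_hasProd h1 (fun hc => sqfSq_mul hc) summable_sqfSq_norm h0
  have hprod' : HasProd (fun p : Nat.Primes => 1 + 1 / ((p : ℕ) : ℂ) ^ 2)
      (∑' n : ℕ, sqfSq n) := by
    refine hprod.congr_fun fun p => (tsum_pow_sqfSq p.2).symm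
  have hz2 : HasProd (fun p : Nat.Primes => (1 - ((p : ℕ) : ℂ) ^ (-2 : ℂ))⁻¹) (riemannZeta 2) :=
    riemannZeta_eulerProduct_hasProd (by norm_num)
  have hz4 : HasProd (fun p : Nat.Primes => (1 - ((p : ℕ) : ℂ) ^ (-4 : ℂ))⁻¹) (riemannZeta 4) :=
    riemannZeta_eulerProduct_hasProd (by norm_num)
  have hmul := hz4.mul hprod'
  have heq : (fun p : Nat.Primes => (1 - ((p : ℕ) : ℂ) ^ (-4 : ℂ))⁻¹ * (1 + 1 / ((p : ℕ) : ℂ) ^ 2))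
      = fun p : Nat.Primes => (1 - ((p : ℕ) : ℂ) ^ (-2 : ℂ))⁻¹ := by
    funext p
    have hp2 : (2 : ℝ) ≤ ‖((p : ℕ) : ℂ)‖ := by
      rw [Complex.norm_natCast]; exact_mod_cast p.2.two_le
    have hx0 : ((p : ℕ) : ℂ) ≠ 0 := by
      intro h; rw [h] at hp2; simp at hp2; linarith
    have hc4 : ((p : ℕ) : ℂ) ^ (-4 : ℂ) = (((p : ℕ) : ℂ) ^ (4 : ℕ))⁻¹ := by
      rw [show (-4 : ℂ) = -((4 : ℕ) : ℂ) by norm_num, Complex.cpow_neg, Complex.cpow_natCast]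
    have hc2 : ((p : ℕ) : ℂ) ^ (-2 : ℂ) = (((p : ℕ) : ℂ) ^ (2 : ℕ))⁻¹ := by
      rw [show (-2 : ℂ) = -((2 : ℕ) : ℂ) by norm_num, Complex.cpow_neg, Complex.cpow_natCast]
    have h4ne : ((p : ℕ) : ℂ) ^ (4 : ℕ) ≠ 1 := by
      intro h
      have h' := congrArg norm h
      rw [norm_pow, norm_one] at h'
      have : (16 : ℝ) ≤ ‖((p : ℕ) : ℂ)‖ ^ 4 := by
        calc (16 : ℝ) = 2 ^ 4 := by norm_num
        _ ≤ _ := pow_le_pow_left₀ (by norm_num) hp2 4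
      linarith
    have h2ne : ((p : ℕ) : ℂ) ^ (2 : ℕ) ≠ 1 := by
      intro h
      have h' := congrArg norm h
      rw [norm_pow, norm_one] at h'
      have : (4 : ℝ) ≤ ‖((p : ℕ) : ℂ)‖ ^ 2 := by
        calc (4 : ℝ) = 2 ^ 2 := by norm_num
        _ ≤ _ := pow_le_pow_left₀ (by norm_num) hp2 2
      linarith
    rw [hc4, hc2]
    have e1 : 1 + 1 / ((p : ℕ) : ℂ) ^ 2 ≠ 0 := by
      intro h
      have hx2 : ((p : ℕ) : ℂ) ^ 2 = -1 := by
        field_simp at h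
        linear_combination h
      have h' := congrArg norm hx2
      rw [norm_pow, norm_neg, norm_one] at h'
      nlinarith [hp2]
    have e4 : 1 - (((p : ℕ) : ℂ) ^ (4 : ℕ))⁻¹ ≠ 0 := by
      rw [sub_ne_zero]
      exact fun h => h4ne (inv_eq_one.mp h.symm)
    have e2 : 1 - (((p : ℕ) : ℂ) ^ (2 : ℕ))⁻¹ ≠ 0 := by
      rw [sub_ne_zero]
      exact fun h => h2ne (inv_eq_one.mp h.symm)
    have hfac : 1 - (((p : ℕ) : ℂ) ^ (4 : ℕ))⁻¹
        = (1 - (((p : ℕ) : ℂ) ^ (2 : ℕ))⁻¹) * (1 + 1 / ((p : ℕ) : ℂ) ^ 2) := by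
      field_simp
      ring
    rw [hfac, mul_inv, mul_assoc, inv_mul_cancel₀ e1, mul_one]
  rw [heq] at hmul
  have : riemannZeta 2 = riemannZeta 4 * ∑' n : ℕ, sqfSq n := hz2.unique hmul
  have hz4ne : riemannZeta 4 ≠ 0 := riemannZeta_ne_zero_of_one_lt_re (by norm_num)
  rw [this]
  field_simp








noncomputable def FF (N d : ℕ) : ℂ :=
  if d ∈ Finset.Icc 1 N then sqfWeight d * (((N / d : ℕ) : ℂ) / (N : ℂ)) else 0

lemma norm_sqfWeight_le (d : ℕ) : ‖sqfWeight d‖ ≤ 1 / (d : ℝ) := by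
  unfold sqfWeight
  split
  · rw [norm_div, norm_one, Complex.norm_natCast]
  · simp only [norm_zero]
    positivity

lemma main_tendsto :
    Tendsto (fun N : ℕ =>
        (1 / (N : ℂ)) * ∑ m ∈ Finset.Icc 1 N,
          ∏ p ∈ m.primeFactors, (1 + 1 / (p : ℂ)))
      atTop (nhds (riemannZeta 2 / riemannZeta 4)) := by
  rw [← tsum_sqfSq]
  have key : Tendsto (fun N : ℕ => ∑' d : ℕ, FF N d) atTop (nhds (∑' d : ℕ, sqfSq d)) := by
    apply tendsto_tsum_of_dominated_convergence (bound := fun d : ℕ => 1 / (d : ℝ) ^ 2)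
    · exact (Real.summable_one_div_nat_pow.mpr one_lt_two).of_nonneg_of_le
        (fun _ => by positivity) (fun _ => le_rfl)
    · intro d
      rcases Nat.eq_zero_or_pos d with rfl | hd
      · have : ∀ N : ℕ, FF N 0 = 0 := fun N => by simp [FF]
        simp only [this]
        have : sqfSq 0 = 0 := by simp [sqfSq, not_squarefree_zero]
        rw [this]
        exact tendsto_const_nhds
      · have hev : ∀ᶠ N in atTop, FF N d = sqfWeight d * (((N / d : ℕ) : ℂ) / (N : ℂ)) := by
          filter_upwards [eventually_ge_atTop d] with N hN
          rw [FF, if_pos (by simp only [mem_Icc]; omega)]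
        refine Tendsto.congr' (EventuallyEq.symm hev) ?_
        rw [sqfSq_eq]
        exact (tendsto_floor_ratio hd).const_mul _
    · refine Eventually.of_forall fun N d => ?_
      unfold FF
      split
      · rename_i hmem
        simp only [mem_Icc] at hmem
        have hd : 0 < d := hmem.1
        have hN : 0 < N := lt_of_lt_of_le hd hmem.2
        rw [norm_mul]
        have h1 : ‖((N / d : ℕ) : ℂ) / (N : ℂ)‖ ≤ 1 / (d : ℝ) := by
          rw [norm_div, Complex.norm_natCast, Complex.norm_natCast]
          rw [div_le_div_iff₀ (by exact_mod_cast hN) (by exact_mod_cast hd)]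
          have : (N / d) * d ≤ N := Nat.div_mul_le_self N d
          calc ((N / d : ℕ) : ℝ) * d ≤ (N : ℝ) := by exact_mod_cast this
            _ = 1 * N := (one_mul _).symm
        calc ‖sqfWeight d‖ * ‖((N / d : ℕ) : ℂ) / (N : ℂ)‖
            ≤ (1 / (d : ℝ)) * (1 / (d : ℝ)) :=
              mul_le_mul (norm_sqfWeight_le d) h1 (norm_nonneg _) (by positivity)
          _ = 1 / (d : ℝ) ^ 2 := by rw [pow_two]; ring
      · simp only [norm_zero]
        positivity
  refine key.congr' ?_
  filter_upwards [eventually_ge_atTop 1] with N hN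
  have hFF : ∑' d : ℕ, FF N d = ∑ d ∈ Finset.Icc 1 N, FF N d :=
    tsum_eq_sum fun d hd => by rw [FF, if_neg hd]
  rw [hFF]
  have : ∀ m ∈ Finset.Icc 1 N, ∏ p ∈ m.primeFactors, (1 + 1 / (p : ℂ))
      = ∑ d ∈ m.divisors, sqfWeight d := by
    intro m hm
    simp only [mem_Icc] at hm
    exact prod_primeFactors_eq_sum_divisors (by omega)
  rw [Finset.sum_congr rfl this, swap_sum, Finset.mul_sum]
  refine Finset.sum_congr rfl fun d hd => ?_
  rw [FF, if_pos hd]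
  ring

theorem cesaro_euler_like_fifteen_over_pi_sq :
    Tendsto (fun N : ℕ =>
        (1 / (N : ℂ)) * ∑ m ∈ Finset.Icc 1 N,
          ∏ p ∈ m.primeFactors, (1 + 1 / (p : ℂ)))
      atTop (nhds (riemannZeta 2 / riemannZeta 4)) ∧
    riemannZeta 2 / riemannZeta 4 = 15 / (Real.pi : ℂ) ^ 2 := by
  constructor
  · exact main_tendsto
  · rw [riemannZeta_two, riemannZeta_four]
    have hπ : (Real.pi : ℂ) ≠ 0 := Complex.ofReal_ne_zero.mpr Real.pi_ne_zero
    field_simp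
    ring
end

section
/- Let χ be a Dirichlet character and s a complex number with real part greater than 1. Then the Cesàro means (1/N) ∑_{m=1}^{N} ∏_{p prime, p ∣ m} (1 + χ(p)/p^{s-1}) converge, as N → ∞, to L(χ, s)/L(χ², 2s), where L(·, ·) denotes the Dirichlet L-series and χ² is the square of the character χ. -/
open Filter Finset

private noncomputable def gAux {n : ℕ} (χ : DirichletCharacter ℂ n) (s : ℂ) (d : ℕ) : ℂ :=
  if Squarefree d then χ d * (d : ℂ) ^ (-s) else 0

private noncomputable def GAux {n : ℕ} (χ : DirichletCharacter ℂ n) (s : ℂ) (d : ℕ) : ℂ :=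
  if Squarefree d then χ d * (d : ℂ) ^ (1 - s) else 0

private lemma natCast_prod_cpow (t : Finset ℕ) (w : ℂ) :
    ((∏ p ∈ t, p : ℕ) : ℂ) ^ w = ∏ p ∈ t, (p : ℂ) ^ w := by
  classical
  induction t using Finset.cons_induction with
  | empty => simp
  | cons a t ha ih =>
      rw [Finset.prod_cons, Nat.cast_mul, Complex.natCast_mul_natCast_cpow, ih, Finset.prod_cons]

private lemma gAux_zero {n : ℕ} (χ : DirichletCharacter ℂ n) (s : ℂ) : gAux χ s 0 = 0 := by
  simp [gAux, not_squarefree_zero]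

private lemma gAux_one {n : ℕ} (χ : DirichletCharacter ℂ n) (s : ℂ) : gAux χ s 1 = 1 := by
  simp [gAux, squarefree_one]

private lemma gAux_mul {n : ℕ} (χ : DirichletCharacter ℂ n) (s : ℂ) {a b : ℕ}
    (hab : Nat.Coprime a b) : gAux χ s (a * b) = gAux χ s a * gAux χ s b := by
  by_cases h : Squarefree (a * b)
  · obtain ⟨ha, hb⟩ := (Nat.squarefree_mul hab).mp h
    rw [gAux, gAux, gAux, if_pos h, if_pos ha, if_pos hb, Nat.cast_mul, Nat.cast_mul, map_mul,
      Complex.natCast_mul_natCast_cpow]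
    ring
  · rw [gAux, if_neg h]
    rcases (not_and_or.mpr ∘ not_and_or.mp) ((Nat.squarefree_mul hab).not.mp h ∘ id) with h'
    · rcases not_and_or.mp ((Nat.squarefree_mul hab).not.mp h) with ha | hb
      · rw [gAux, if_neg ha, zero_mul]
      · rw [gAux, gAux, if_neg hb, mul_zero]

private lemma gAux_norm_le {n : ℕ} (χ : DirichletCharacter ℂ n) {s : ℂ} (hs : 1 < s.re) (d : ℕ) :
    ‖gAux χ s d‖ ≤ (d : ℝ) ^ (-s.re) := by
  rcases Nat.eq_zero_or_pos d with rfl | hd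
  · rw [gAux_zero, norm_zero, Nat.cast_zero, Real.zero_rpow (by linarith)]
  by_cases h : Squarefree d
  · rw [gAux, if_pos h, norm_mul, Complex.norm_natCast_cpow_of_pos hd, Complex.neg_re]
    exact mul_le_of_le_one_left (Real.rpow_nonneg (Nat.cast_nonneg d) _)
      (DirichletCharacter.norm_le_one χ _)
  · rw [gAux, if_neg h, norm_zero]
    exact Real.rpow_nonneg (Nat.cast_nonneg d) _

private lemma gAux_summable {n : ℕ} (χ : DirichletCharacter ℂ n) {s : ℂ} (hs : 1 < s.re) :
    Summable (fun d : ℕ => ‖gAux χ s d‖) := by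
  refine Summable.of_nonneg_of_le (fun d => norm_nonneg _) (gAux_norm_le χ hs) ?_
  exact Real.summable_nat_rpow.mpr (by linarith)

private lemma GAux_eq {n : ℕ} (χ : DirichletCharacter ℂ n) (s : ℂ) {d : ℕ} (hd : d ≠ 0) :
    GAux χ s d = (d : ℂ) * gAux χ s d := by
  have hd0 : (d : ℂ) ≠ 0 := Nat.cast_ne_zero.mpr hd
  by_cases h : Squarefree d
  · rw [GAux, gAux, if_pos h, if_pos h, show (1 : ℂ) - s = 1 + -s by ring,
      Complex.cpow_add _ _ hd0, Complex.cpow_one]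
    ring
  · rw [GAux, gAux, if_neg h, if_neg h, mul_zero]

private lemma GAux_norm_le {n : ℕ} (χ : DirichletCharacter ℂ n) (s : ℂ) {d : ℕ} (hd : 0 < d) :
    ‖GAux χ s d‖ ≤ (d : ℝ) ^ (1 - s.re) := by
  by_cases h : Squarefree d
  · rw [GAux, if_pos h, norm_mul, Complex.norm_natCast_cpow_of_pos hd]
    have : (1 - s).re = 1 - s.re := by simp
    rw [this]
    exact mul_le_of_le_one_left (Real.rpow_nonneg (Nat.cast_nonneg d) _)
      (DirichletCharacter.norm_le_one χ _)
  · rw [GAux, if_neg h, norm_zero]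
    exact Real.rpow_nonneg (Nat.cast_nonneg d) _

private lemma prod_eq_sum_divisors {n : ℕ} (χ : DirichletCharacter ℂ n) (s : ℂ)
    {m : ℕ} (hm : m ≠ 0) :
    ∏ p ∈ m.primeFactors, (1 + χ p / (p : ℂ) ^ (s - 1)) = ∑ d ∈ m.divisors, GAux χ s d := by
  have hstep : ∀ p ∈ m.primeFactors, (1 + χ p / (p : ℂ) ^ (s - 1))
      = χ p * (p : ℂ) ^ (1 - s) + 1 := by
    intro p hp
    rw [add_comm, div_eq_mul_inv, ← Complex.cpow_neg, neg_sub]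
  rw [Finset.prod_congr rfl hstep, Finset.prod_add]
  have hright : ∑ d ∈ m.divisors, GAux χ s d
      = ∑ d ∈ m.divisors with Squarefree d, χ d * (d : ℂ) ^ (1 - s) := by
    rw [Finset.sum_filter]
    exact Finset.sum_congr rfl fun d _ => rfl
  rw [hright, Nat.sum_divisors_filter_squarefree hm, Nat.factors_eq]
  refine Finset.sum_congr rfl fun t ht ↦ ?_
  have h1 : (t.val.prod : ℕ) = ∏ p ∈ t, p := by
    rw [Finset.prod_val]
    rfl
  rw [Finset.prod_const_one, mul_one, Finset.prod_mul_distrib, h1, Nat.cast_prod, map_prod,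
    natCast_prod_cpow]

private lemma sum_Icc_divisors (F : ℕ → ℂ) (N : ℕ) :
    ∑ m ∈ Finset.Icc 1 N, ∑ d ∈ m.divisors, F d
      = ∑ d ∈ Finset.Icc 1 N, ((N / d : ℕ) : ℂ) * F d := by
  classical
  have h1 : ∀ m ∈ Finset.Icc 1 N, ∑ d ∈ m.divisors, F d
      = ∑ d ∈ Finset.Icc 1 N, if d ∣ m then F d else 0 := by
    intro m hm
    rw [Finset.mem_Icc] at hm
    rw [← Finset.sum_filter]
    refine (Finset.sum_congr ?_ fun _ _ => rfl)
    ext k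
    simp only [Nat.mem_divisors, Finset.mem_filter, Finset.mem_Icc]
    constructor
    · rintro ⟨hk, hm0⟩
      have hmpos : 0 < m := Nat.pos_of_ne_zero hm0
      exact ⟨⟨Nat.pos_of_dvd_of_pos hk hmpos, (Nat.le_of_dvd hmpos hk).trans hm.2⟩, hk⟩
    · rintro ⟨_, hk⟩
      exact ⟨hk, by omega⟩
  rw [Finset.sum_congr rfl h1, Finset.sum_comm]
  refine Finset.sum_congr rfl fun d hd ↦ ?_
  rw [← Finset.sum_filter, Finset.sum_const]
  have hcard : {m ∈ Finset.Icc 1 N | d ∣ m}.card = N / d := by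
    have : Finset.Icc 1 N = Finset.Ioc 0 N := by rw [← Finset.Icc_add_one_left_eq_Ioc, zero_add]
    rw [this]
    exact Nat.Ioc_filter_dvd_card_eq_div N d
  rw [hcard, nsmul_eq_mul]

private lemma tsum_gAux_eq {n : ℕ} [NeZero n] (χ : DirichletCharacter ℂ n) {s : ℂ}
    (hs : 1 < s.re) :
    ∑' d, gAux χ s d = LSeries (fun m : ℕ => χ m) s /
      LSeries (fun m : ℕ => (χ ^ 2) m) (2 * s) := by
  have hs2 : 1 < (2 * s).re := by
    have : (2 * s).re = 2 * s.re := by simp [Complex.mul_re]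
    rw [this]; linarith
  have hL2 : LSeries (fun m : ℕ => (χ ^ 2) m) (2 * s) ≠ 0 :=
    DirichletCharacter.LSeries_ne_zero_of_one_lt_re (χ ^ 2) hs2
  have H1 := DirichletCharacter.LSeries_eulerProduct_hasProd χ hs
  have H2 := DirichletCharacter.LSeries_eulerProduct_hasProd (χ ^ 2) hs2
  have H3 := EulerProduct.eulerProduct_hasProd (gAux_one χ s)
    (fun {a b} hab => gAux_mul χ s hab) (gAux_summable χ hs) (gAux_zero χ s)
  have hppow : ∀ p : Nat.Primes, (∑' e : ℕ, gAux χ s ((p : ℕ) ^ e))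
      = 1 + χ (p : ℕ) * (p : ℂ) ^ (-s) := by
    intro p
    have h0 : ∀ e ∉ ({0, 1} : Finset ℕ), gAux χ s ((p : ℕ) ^ e) = 0 := by
      intro e he
      simp only [Finset.mem_insert, Finset.mem_singleton] at he
      push_neg at he
      have h2 : 2 ≤ e := by omega
      have hns : ¬ Squarefree ((p : ℕ) ^ e) := by
        intro hsq
        exact p.prop.not_isUnit (hsq (p : ℕ) (by
          calc ((p : ℕ) * (p : ℕ)) = (p : ℕ) ^ 2 := (sq _).symm
          _ ∣ (p : ℕ) ^ e := pow_dvd_pow _ h2))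
      rw [gAux, if_neg hns]
    rw [tsum_eq_sum h0, Finset.sum_pair (by norm_num : (0 : ℕ) ≠ 1), pow_zero, pow_one,
      gAux_one, gAux, if_pos p.prop.squarefree]
  have H3' : HasProd (fun p : Nat.Primes => 1 + χ (p : ℕ) * (p : ℂ) ^ (-s))
      (∑' d, gAux χ s d) := by
    have := H3
    simp only [hppow] at this
    exact this
  have H4 := H2.mul H3'
  have heq : (fun p : Nat.Primes => (1 - (χ ^ 2) (p : ℕ) * (p : ℂ) ^ (-(2 * s)))⁻¹ *
      (1 + χ (p : ℕ) * (p : ℂ) ^ (-s)))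
      = fun p : Nat.Primes => (1 - χ (p : ℕ) * (p : ℂ) ^ (-s))⁻¹ := by
    funext p
    set x : ℂ := χ (p : ℕ) * (p : ℂ) ^ (-s) with hx
    have hp1 : (1 : ℝ) < (p : ℕ) := by exact_mod_cast p.prop.one_lt
    have hxnorm : ‖x‖ < 1 := by
      calc ‖x‖ ≤ 1 * ‖(p : ℂ) ^ (-s)‖ := by
            rw [hx, norm_mul]
            exact mul_le_mul_of_nonneg_right (DirichletCharacter.norm_le_one χ _) (norm_nonneg _)
        _ = (p : ℝ) ^ (-s.re) := by
            rw [one_mul, Complex.norm_natCast_cpow_of_pos p.prop.pos, Complex.neg_re]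
        _ < 1 := Real.rpow_lt_one_of_one_lt_of_neg hp1 (by linarith)
    have hne1 : (1 : ℂ) - x ≠ 0 := by
      intro h
      have : x = 1 := by linear_combination -h
      rw [this] at hxnorm; simp at hxnorm
    have hne2 : (1 : ℂ) + x ≠ 0 := by
      intro h
      have : x = -1 := by linear_combination h
      rw [this] at hxnorm; simp at hxnorm
    have hp0 : ((p : ℕ) : ℂ) ≠ 0 := Nat.cast_ne_zero.mpr p.prop.pos.ne'
    have key : (χ ^ 2) (p : ℕ) * (p : ℂ) ^ (-(2 * s)) = x ^ 2 := by
      rw [pow_two, MulChar.mul_apply, show -(2 * s) = -s + -s by ring,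
        Complex.cpow_add _ _ hp0, hx]
      ring
    rw [key, show (1 : ℂ) - x ^ 2 = (1 - x) * (1 + x) by ring, mul_inv,
      mul_assoc, inv_mul_cancel₀ hne2, mul_one]
  rw [heq] at H4
  have hmain : LSeries (fun m : ℕ => (χ ^ 2) m) (2 * s) * ∑' d, gAux χ s d
      = LSeries (fun m : ℕ => χ m) s := H4.unique H1
  field_simp [hL2]
  linear_combination hmain

theorem cesaro_dirichlet_plus (n : ℕ) [NeZero n] (χ : DirichletCharacter ℂ n)
    (s : ℂ) (hs : 1 < s.re) :
    Tendsto (fun N : ℕ =>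
        (1 / (N : ℂ)) * ∑ m ∈ Finset.Icc 1 N,
          ∏ p ∈ m.primeFactors, (1 + χ p / (p : ℂ) ^ (s - 1)))
      atTop (nhds (LSeries (fun m : ℕ => χ m) s /
        LSeries (fun m : ℕ => (χ ^ 2) m) (2 * s))) := by
  rw [← tsum_gAux_eq χ hs]
  set A : ℕ → ℂ := fun N => ∑ d ∈ Finset.Icc 1 N, gAux χ s d with hA
  set E : ℕ → ℂ := fun N => ∑ d ∈ Finset.Icc 1 N,
    (((N / d : ℕ) : ℂ) / (N : ℂ) - ((d : ℂ))⁻¹) * GAux χ s d with hE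
  have key : ∀ N : ℕ, (1 / (N : ℂ)) * ∑ m ∈ Finset.Icc 1 N,
      ∏ p ∈ m.primeFactors, (1 + χ p / (p : ℂ) ^ (s - 1)) = A N + E N := by
    intro N
    have h1 : ∑ m ∈ Finset.Icc 1 N, ∏ p ∈ m.primeFactors, (1 + χ p / (p : ℂ) ^ (s - 1))
        = ∑ m ∈ Finset.Icc 1 N, ∑ d ∈ m.divisors, GAux χ s d := by
      refine Finset.sum_congr rfl fun m hm => ?_
      rw [Finset.mem_Icc] at hm
      exact prod_eq_sum_divisors χ s (by omega)
    rw [h1, sum_Icc_divisors, Finset.mul_sum, hA, hE, ← Finset.sum_add_distrib]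
    refine Finset.sum_congr rfl fun d hd => ?_
    rw [Finset.mem_Icc] at hd
    have hd0 : d ≠ 0 := by omega
    rw [GAux_eq χ s hd0]
    have hdC : (d : ℂ) ≠ 0 := Nat.cast_ne_zero.mpr hd0
    field_simp
    ring
  have hA_tendsto : Tendsto A atTop (nhds (∑' d, gAux χ s d)) := by
    have hsum : Summable (fun d : ℕ => gAux χ s d) := (gAux_summable χ hs).of_norm
    have h := hsum.hasSum.tendsto_sum_nat
    have h2 := h.comp (tendsto_add_atTop_nat 1)
    refine h2.congr fun N => ?_
    show ∑ d ∈ Finset.range (N + 1), gAux χ s d = A N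
    simp only [hA]
    rw [Finset.range_eq_Ico, Finset.sum_eq_sum_Ico_succ_bot (Nat.succ_pos N), gAux_zero,
      zero_add, Nat.succ_eq_add_one, Finset.Ico_add_one_right_eq_Icc, zero_add]
  have hE_tendsto : Tendsto E atTop (nhds 0) := by
    set u : ℕ → ℝ := fun i => ((1 + i : ℕ) : ℝ) ^ (1 - s.re) with hu
    have hu_tendsto : Tendsto u atTop (nhds 0) := by
      have h1 : Tendsto (fun x : ℝ => x ^ (-(s.re - 1))) atTop (nhds 0) :=
        tendsto_rpow_neg_atTop (by linarith)
      have h2 : Tendsto (fun i : ℕ => ((1 + i : ℕ) : ℝ)) atTop atTop :=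
        tendsto_natCast_atTop_atTop.comp ((tendsto_add_atTop_nat 1).congr fun n => add_comm n 1)
      have := h1.comp h2
      refine this.congr fun i => ?_
      simp only [Function.comp_apply, neg_sub]
      rfl
    have hcesaro := hu_tendsto.cesaro
    refine squeeze_zero_norm (fun N => ?_) hcesaro
    calc ‖E N‖ ≤ ∑ d ∈ Finset.Icc 1 N, ‖(((N / d : ℕ) : ℂ) / (N : ℂ) - ((d : ℂ))⁻¹)
          * GAux χ s d‖ := norm_sum_le _ _
      _ ≤ ∑ d ∈ Finset.Icc 1 N, (N : ℝ)⁻¹ * ((d : ℝ) ^ (1 - s.re)) := by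
          refine Finset.sum_le_sum fun d hd => ?_
          rw [Finset.mem_Icc] at hd
          have hd1 : 1 ≤ d := hd.1
          have hdN : d ≤ N := hd.2
          have hN1 : 1 ≤ N := le_trans hd1 hdN
          have hdR : (0 : ℝ) < d := by exact_mod_cast hd1
          have hNR : (0 : ℝ) < N := by exact_mod_cast hN1
          rw [norm_mul]
          refine mul_le_mul ?_ (GAux_norm_le χ s (by omega)) (norm_nonneg _)
            (inv_nonneg.mpr hNR.le)
          have hcast : (((N / d : ℕ) : ℂ) / (N : ℂ) - ((d : ℂ))⁻¹)
              = (((((N / d : ℕ) : ℝ) / (N : ℝ) - ((d : ℝ))⁻¹) : ℝ) : ℂ) := by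
            push_cast
            ring
          rw [hcast, Complex.norm_real]
          have hq1 : ((N / d : ℕ) : ℝ) * d ≤ N := by
            exact_mod_cast Nat.div_mul_le_self N d
          have hq2 : (N : ℝ) < ((N / d : ℕ) : ℝ) * d + d := by
            have hmlt : N % d < d := Nat.mod_lt _ (by omega)
            have hq2n : N < d * (N / d) + d := by
              conv_lhs => rw [← Nat.div_add_mod N d]
              exact Nat.add_lt_add_left hmlt _
            have h' : (N : ℝ) < (d : ℝ) * ((N / d : ℕ) : ℝ) + d := by exact_mod_cast hq2n
            rw [mul_comm] at h'
            exact h'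
          rw [Real.norm_eq_abs, abs_sub_le_iff]
          constructor
          · have h1 : ((N / d : ℕ) : ℝ) / N ≤ (d : ℝ)⁻¹ := by
              rw [div_le_iff₀ hNR, inv_mul_eq_div, le_div_iff₀ hdR]
              linarith
            have h2 : (0 : ℝ) < (N : ℝ)⁻¹ := inv_pos.mpr hNR
            linarith
          · rw [sub_le_iff_le_add]
            have : (d : ℝ)⁻¹ ≤ (((N / d : ℕ) : ℝ) + 1) / N := by
              rw [inv_eq_one_div, div_le_div_iff₀ hdR hNR]
              linarith
            calc (d : ℝ)⁻¹ ≤ (((N / d : ℕ) : ℝ) + 1) / N := this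
              _ = (N : ℝ)⁻¹ + ((N / d : ℕ) : ℝ) / N := by
                  field_simp
                  ring
      _ = (N : ℝ)⁻¹ * ∑ i ∈ Finset.range N, u i := by
          rw [← Finset.mul_sum]
          congr 1
          rw [← Finset.Ico_add_one_right_eq_Icc, Finset.sum_Ico_eq_sum_range]
          simp only [Nat.add_sub_cancel]
          rfl
  have := hA_tendsto.add hE_tendsto
  rw [add_zero] at this
  exact Tendsto.congr (fun N => (key N).symm) this
end
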